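/- The bound L₁(f̂,ĝ) ≤ (2 - r/(b-a))·r is tight: for a < b and 0 < r < b - a, define f₀(x) = a for x ∈ [0, 1 - r/(2(b-a))] and f₀(x) = b otherwise, and g₀(x) = b for x ∈ [0, 1 - r/(2(b-a))] and g₀(x) = a otherwise. Then D₁↕(f₀, g₀) = r and L₁(f̂₀, ĝ₀) = (2 - r/(b-a)) · r. -/

import Mathlib

open MeasureTheory
lemma int_if (c p q : ℝ) (h0 : 0 ≤ c) (h1 : c ≤ 1) :
    (∫ x in Set.Icc (0:ℝ) 1, (if x ≤ c then p else q)) = c * p + (1 - c) * q := by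
  have e1 : (∫ x in Set.Ioc (0:ℝ) c, (if x ≤ c then p else q)) = c * p := by
    rw [setIntegral_congr_fun (g := fun _ => p) measurableSet_Ioc
      (fun x hx => by simp [hx.2]), setIntegral_const]
    simp [Real.volume_Ioc, ENNReal.toReal_ofReal h0, mul_comm, max_eq_left h0]
  have e2 : (∫ x in Set.Ioc c 1, (if x ≤ c then p else q)) = (1 - c) * q := by
    rw [setIntegral_congr_fun (g := fun _ => q) measurableSet_Ioc
      (fun x hx => by simp [not_le.2 hx.1]), setIntegral_const]
    simp [Real.volume_Ioc, ENNReal.toReal_ofReal (by linarith : (0:ℝ) ≤ 1 - c), mul_comm, h1]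
  have hi1 : IntegrableOn (fun x : ℝ => if x ≤ c then p else q) (Set.Ioc 0 c) := by
    apply IntegrableOn.congr_fun (f := fun _ => p)
      (integrableOn_const measure_Ioc_lt_top.ne)
      (fun x hx => by simp [hx.2]) measurableSet_Ioc
  have hi2 : IntegrableOn (fun x : ℝ => if x ≤ c then p else q) (Set.Ioc c 1) := by
    apply IntegrableOn.congr_fun (f := fun _ => q)
      (integrableOn_const measure_Ioc_lt_top.ne)
      (fun x hx => by simp [not_le.2 hx.1]) measurableSet_Ioc
  rw [MeasureTheory.integral_Icc_eq_integral_Ioc, ← Set.Ioc_union_Ioc_eq_Ioc h0 h1,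
    MeasureTheory.setIntegral_union (Set.Ioc_disjoint_Ioc_of_le le_rfl) measurableSet_Ioc hi1 hi2, e1, e2]


/-- Tightness of the bound `L₁(f̂, ĝ) ≤ (2 - r/(b-a)) · r`: the pair of step functions
`f₀, g₀` attains `D₁↕(f₀, g₀) = r` and `L₁(f̂₀, ĝ₀) = (2 - r/(b-a)) · r`. -/
theorem stmt3 (a b r : ℝ) (hab : a < b) (hr0 : 0 < r) (hrb : r < b - a)
    (f₀ g₀ : ℝ → ℝ)
    (hf : ∀ x, f₀ x = if x ≤ 1 - r / (2 * (b - a)) then a else b)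
    (hg : ∀ x, g₀ x = if x ≤ 1 - r / (2 * (b - a)) then b else a) :
    (⨅ α : ℝ, ∫ x in Set.Icc (0:ℝ) 1, |f₀ x + α - g₀ x|) = r ∧
    (∫ x in Set.Icc (0:ℝ) 1,
        |(f₀ x - ∫ t in Set.Icc (0:ℝ) 1, f₀ t) - (g₀ x - ∫ t in Set.Icc (0:ℝ) 1, g₀ t)|) =
      (2 - r / (b - a)) * r := by
  have hd : (0:ℝ) < b - a := by linarith
  set c : ℝ := 1 - r / (2 * (b - a)) with hc_def
  clear_value c
  have hhalf : r / (2 * (b - a)) < 1 / 2 := by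
    rw [div_lt_iff₀ (by positivity)]; linarith
  have hpos : 0 < r / (2 * (b - a)) := by positivity
  have hc0 : (0:ℝ) ≤ c := by rw [hc_def]; linarith
  have hc1 : c ≤ 1 := by rw [hc_def]; linarith
  have hchalf : 1 / 2 < c := by rw [hc_def]; linarith
  have hc_eq : (1 - c) * (2 * (b - a)) = r := by
    rw [hc_def]; field_simp; ring
  constructor
  · -- first conjunct
    have hI : ∀ α : ℝ, (∫ x in Set.Icc (0:ℝ) 1, |f₀ x + α - g₀ x|) =
        c * |α + (a - b)| + (1 - c) * |α + (b - a)| := by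
      intro α
      rw [setIntegral_congr_fun (g := fun x => if x ≤ c then |α + (a - b)| else |α + (b - a)|)
        measurableSet_Icc (fun x _ => by
          by_cases h : x ≤ c
          · simp only [hf x, hg x, if_pos h]
            rw [show a + α - b = α + (a - b) by ring]
          · simp only [hf x, hg x, if_neg h]
            rw [show b + α - a = α + (b - a) by ring]), int_if _ _ _ hc0 hc1]
    simp only [hI]
    apply le_antisymm
    · have hble : BddBelow (Set.range fun α : ℝ =>
          c * |α + (a - b)| + (1 - c) * |α + (b - a)|) := by
        refine ⟨0, ?_⟩
        rintro y ⟨α, rfl⟩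
        have h1 := abs_nonneg (α + (a - b)); have h2 := abs_nonneg (α + (b - a))
        show (0:ℝ) ≤ c * |α + (a - b)| + (1 - c) * |α + (b - a)|
        nlinarith
      calc (⨅ α : ℝ, c * |α + (a - b)| + (1 - c) * |α + (b - a)|)
          ≤ c * |(b - a) + (a - b)| + (1 - c) * |(b - a) + (b - a)| := ciInf_le hble (b - a)
        _ = r := by
            rw [show (b - a) + (a - b) = (0:ℝ) by ring,
              show (b - a) + (b - a) = 2 * (b - a) by ring, abs_zero,
              abs_of_pos (by positivity)]
            linarith [hc_eq]
    · apply le_ciInf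
      intro α
      have h1 : 2 * (b - a) ≤ |α + (a - b)| + |α + (b - a)| := by
        have := abs_sub (α + (b - a)) (α + (a - b))
        rw [show α + (b - a) - (α + (a - b)) = 2 * (b - a) by ring,
          abs_of_pos (by positivity : (0:ℝ) < 2 * (b - a))] at this
        linarith
      have t1 : (1 - c) * (2 * (b - a)) ≤ (1 - c) * (|α + (a - b)| + |α + (b - a)|) :=
        mul_le_mul_of_nonneg_left h1 (by linarith)
      have t2 : 0 ≤ (2 * c - 1) * |α + (a - b)| :=
        mul_nonneg (by linarith) (abs_nonneg _)
      nlinarith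
  · -- second conjunct
    have hMf : (∫ t in Set.Icc (0:ℝ) 1, f₀ t) = c * a + (1 - c) * b := by
      rw [setIntegral_congr_fun measurableSet_Icc (fun x _ => hf x), int_if _ _ _ hc0 hc1]
    have hMg : (∫ t in Set.Icc (0:ℝ) 1, g₀ t) = c * b + (1 - c) * a := by
      rw [setIntegral_congr_fun measurableSet_Icc (fun x _ => hg x), int_if _ _ _ hc0 hc1]
    rw [setIntegral_congr_fun (g := fun x => if x ≤ c then r else 2 * c * (b - a))
      measurableSet_Icc (fun x _ => by
        by_cases h : x ≤ c
        · simp only [hf x, hg x, hMf, hMg, if_pos h]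
          rw [show a - (c * a + (1 - c) * b) - (b - (c * b + (1 - c) * a)) = -r by
            linear_combination -hc_eq, abs_neg, abs_of_pos hr0]
        · simp only [hf x, hg x, hMf, hMg, if_neg h]
          rw [show b - (c * a + (1 - c) * b) - (a - (c * b + (1 - c) * a)) = 2 * c * (b - a)
            by ring, abs_of_pos (by nlinarith)]), int_if _ _ _ hc0 hc1]
    rw [hc_def]
    field_simp
    ring
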